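/- If P = [[Z, B], [Bᵀ, X]] is a symmetric positive semidefinite real matrix with Z ∈ ℝ^{p×p}, B ∈ ℝ^{p×n}, X ∈ ℝ^{n×n}, and Z⁻ denotes the Moore–Penrose pseudoinverse of Z, then Z Z⁻ B = B. -/

import Mathlib

open Matrix

-- Moore–Penrose pseudoinverse via its four characterizing properties.
open Classical in
noncomputable def moorePenrose {p : ℕ} (Z : Matrix (Fin p) (Fin p) ℝ) :
    Matrix (Fin p) (Fin p) ℝ :=
  if h : ∃ W : Matrix (Fin p) (Fin p) ℝ,
      Z * W * Z = Z ∧ W * Z * W = W ∧ (Z * W)ᵀ = Z * W ∧ (W * Z)ᵀ = W * Z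
  then h.choose else 0

lemma exists_mp {p : ℕ} (Z : Matrix (Fin p) (Fin p) ℝ) (hZ : Z.IsHermitian) :
    ∃ W : Matrix (Fin p) (Fin p) ℝ,
      Z * W * Z = Z ∧ W * Z * W = W ∧ (Z * W)ᵀ = Z * W ∧ (W * Z)ᵀ = W * Z := by
  set U : Matrix (Fin p) (Fin p) ℝ := (hZ.eigenvectorUnitary : Matrix (Fin p) (Fin p) ℝ) with hU
  have hUU : star U * U = 1 := (mem_unitaryGroup_iff').mp hZ.eigenvectorUnitary.2
  have hsU : star U = Uᵀ := conjTranspose_eq_transpose_of_trivial U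
  have hspec : Z = U * diagonal (RCLike.ofReal ∘ hZ.eigenvalues) * star U := hZ.spectral_theorem
  set d : Fin p → ℝ := hZ.eigenvalues with hd
  have hd' : (RCLike.ofReal ∘ hZ.eigenvalues : Fin p → ℝ) = d := by
    funext i; simp [hd]
  rw [hd'] at hspec
  set g : Fin p → ℝ := fun i => if d i = 0 then 0 else (d i)⁻¹ with hg
  have key : ∀ a b : Fin p → ℝ,
      (U * diagonal a * star U) * (U * diagonal b * star U) = U * diagonal (a * b) * star U := by
    intro a b
    simp only [mul_assoc]
    rw [← mul_assoc (star U) U (diagonal b * star U), hUU, one_mul,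
      ← mul_assoc (diagonal a) (diagonal b) (star U), diagonal_mul_diagonal]
    rfl
  have htr : ∀ a : Fin p → ℝ, (U * diagonal a * star U)ᵀ = U * diagonal a * star U := by
    intro a
    rw [hsU]
    simp [transpose_mul, diagonal_transpose, mul_assoc]
  have hdgd : d * g * d = d := by
    funext i; by_cases h : d i = 0 <;> simp [hg, Pi.mul_apply, h]
  have hgdg : g * d * g = g := by
    funext i; by_cases h : d i = 0 <;> simp [hg, Pi.mul_apply, h]
  refine ⟨U * diagonal g * star U, ?_, ?_, ?_, ?_⟩
  · rw [hspec, key, key, hdgd]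
  · rw [hspec, key, key, hgdg]
  · rw [hspec, key, htr]
  · rw [hspec, key, htr]

lemma ker_lemma {p n : ℕ}
    (Z : Matrix (Fin p) (Fin p) ℝ) (B : Matrix (Fin p) (Fin n) ℝ)
    (X : Matrix (Fin n) (Fin n) ℝ)
    (hP : (fromBlocks Z B Bᵀ X).PosSemidef) :
    ∀ u : Fin p → ℝ, Z *ᵥ u = 0 → Bᵀ *ᵥ u = 0 := by
  intro u hu
  set v : Fin n → ℝ := Bᵀ *ᵥ u with hv
  have huBv : u ⬝ᵥ (B *ᵥ v) = v ⬝ᵥ v := by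
    rw [hv, dotProduct_mulVec, ← mulVec_transpose, dotProduct_comm]
  have hself : 0 ≤ v ⬝ᵥ v := by
    simpa using dotProduct_star_self_nonneg v
  have quad : ∀ t : ℝ, 0 ≤ 2 * t * (v ⬝ᵥ v) + v ⬝ᵥ (X *ᵥ v) := by
    intro t
    have h := hP.dotProduct_mulVec_nonneg (Sum.elim (t • u) v)
    simp only [fromBlocks_mulVec, Sum.elim_comp_inl, Sum.elim_comp_inr,
      sumElim_dotProduct_sumElim, star_trivial,
      mulVec_smul, hu, smul_zero, zero_add, dotProduct_add, smul_dotProduct,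
      dotProduct_smul, smul_eq_mul] at h
    rw [← hv] at h
    have heq : 2 * t * (v ⬝ᵥ v) + v ⬝ᵥ (X *ᵥ v)
        = t * (u ⬝ᵥ (B *ᵥ v)) + (t * (v ⬝ᵥ v) + v ⬝ᵥ (X *ᵥ v)) := by
      rw [huBv]; ring
    rw [heq]; exact h
  have hvv : v ⬝ᵥ v = 0 := by
    rcases (lt_or_eq_of_le hself).symm with h | h
    · exact h.symm
    · exfalso
      set q := v ⬝ᵥ (X *ᵥ v)
      have key : 2 * ((-q - 1) / (2 * (v ⬝ᵥ v))) * (v ⬝ᵥ v) = -q - 1 := by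
        field_simp
      have := quad ((-q - 1) / (2 * (v ⬝ᵥ v)))
      rw [key] at this
      linarith
  simpa [← hv] using (dotProduct_self_eq_zero).mp hvv

theorem psd_block_range_condition {p n : ℕ}
    (Z : Matrix (Fin p) (Fin p) ℝ) (B : Matrix (Fin p) (Fin n) ℝ)
    (X : Matrix (Fin n) (Fin n) ℝ)
    (hP : (fromBlocks Z B Bᵀ X).PosSemidef) :
    Z * moorePenrose Z * B = B := by
  have hZ : Z.IsHermitian := by
    exact (isHermitian_fromBlocks_iff.mp hP.isHermitian).1
  have hZt : Zᵀ = Z := by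
    rw [← conjTranspose_eq_transpose_of_trivial]; exact hZ
  have hex := exists_mp Z hZ
  unfold moorePenrose
  rw [dif_pos hex]
  obtain ⟨h1, h2, h3, h4⟩ := hex.choose_spec
  set W := hex.choose with hWdef
  set M : Matrix (Fin p) (Fin p) ℝ := 1 - Z * W with hM
  have hMZ : M * Z = 0 := by
    rw [hM, sub_mul, one_mul, h1, sub_self]
  have hMsymm : Mᵀ = M := by
    rw [hM, transpose_sub, transpose_one, h3]
  have hZM : Z * M = 0 := by
    have := congrArg transpose hMZ
    rw [transpose_mul, hMsymm, hZt, transpose_zero] at this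
    exact this
  have hMB : M * B = 0 := by
    ext i j
    have hu : Z *ᵥ (fun k => M i k) = 0 := by
      funext l
      have h0 : (Z * M) l i = 0 := by rw [hZM]; rfl
      calc (Z *ᵥ fun k => M i k) l = ∑ k, Z l k * M i k := rfl
        _ = ∑ k, Z l k * M k i := by
            refine Finset.sum_congr rfl fun k _ => ?_
            have : Mᵀ k i = M k i := by rw [hMsymm]
            rw [← this]; rfl
        _ = (Z * M) l i := rfl
        _ = 0 := h0
    have hb := ker_lemma Z B X hP _ hu
    have : (Bᵀ *ᵥ fun k => M i k) j = 0 := by rw [hb]; rfl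
    calc (M * B) i j = ∑ k, M i k * B k j := rfl
      _ = ∑ k, Bᵀ j k * M i k := by
          refine Finset.sum_congr rfl fun k _ => ?_
          rw [transpose_apply, mul_comm]
      _ = (Bᵀ *ᵥ fun k => M i k) j := rfl
      _ = 0 := this
  have : (1 - M) * B = B := by
    rw [Matrix.sub_mul, Matrix.one_mul, hMB, sub_zero]
  rw [hM] at this
  simpa using this
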